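/- For the vector field X associated to u̇ = -v + h, v̇ = u + h, ẇ = -w + h with h(u,v,w) = a₁u² - a₁v² + (1-2a₁)w² + (6a₁-5)uv + (3-4a₁)uw + vw, the polynomial F(u,v,w) = w + (a₁-1)(u-w)² + (1-2a₁)(u-w)(v-w) + (1-a₁)(v-w)² satisfies XF = -F. -/

import Mathlib

noncomputable def h5 (a₁ u v w : ℝ) : ℝ :=
  a₁*u^2 - a₁*v^2 + (1 - 2*a₁)*w^2 + (6*a₁ - 5)*u*v + (3 - 4*a₁)*u*w + v*w

noncomputable def F5 (a₁ u v w : ℝ) : ℝ :=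
  w + (a₁ - 1)*(u - w)^2 + (1 - 2*a₁)*(u - w)*(v - w) + (1 - a₁)*(v - w)^2

/-- F = 0 is an invariant algebraic surface with cofactor -1. -/
theorem stmt_5 : ∀ a₁ u v w : ℝ,
    (-v + h5 a₁ u v w) * deriv (fun s => F5 a₁ s v w) u
    + (u + h5 a₁ u v w) * deriv (fun s => F5 a₁ u s w) v
    + (-w + h5 a₁ u v w) * deriv (fun s => F5 a₁ u v s) w
    = -F5 a₁ u v w := by
  intro a₁ u v w
  have h1 : deriv (fun s => F5 a₁ s v w) u
      = (a₁ - 1)*(2*(u - w)) + (1 - 2*a₁)*(v - w) := by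
    unfold F5
    have hs : HasDerivAt (fun s : ℝ => s - w) 1 u := (hasDerivAt_id u).sub_const w
    have hd := (((hasDerivAt_const u w).add
        ((hs.pow 2).const_mul (a₁ - 1))).add
        ((hs.const_mul (1 - 2*a₁)).mul_const (v - w))).add
        (hasDerivAt_const u ((1 - a₁)*(v - w)^2))
    erw [hd.deriv]; push_cast; ring
  have h2 : deriv (fun s => F5 a₁ u s w) v
      = (1 - 2*a₁)*(u - w) + (1 - a₁)*(2*(v - w)) := by
    unfold F5
    have hs : HasDerivAt (fun s : ℝ => s - w) 1 v := (hasDerivAt_id v).sub_const w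
    have hd := ((hasDerivAt_const v (w + (a₁ - 1)*(u - w)^2)).add
        (hs.const_mul ((1 - 2*a₁)*(u - w)))).add
        ((hs.pow 2).const_mul (1 - a₁))
    erw [hd.deriv]; push_cast; ring
  have h3 : deriv (fun s => F5 a₁ u v s) w
      = 1 - (a₁ - 1)*(2*(u - w)) - (1 - 2*a₁)*((v - w) + (u - w)) - (1 - a₁)*(2*(v - w)) := by
    unfold F5
    have hu : HasDerivAt (fun s : ℝ => u - s) (-1) w := by
      simpa using (hasDerivAt_id w).const_sub u
    have hv : HasDerivAt (fun s : ℝ => v - s) (-1) w := by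
      simpa using (hasDerivAt_id w).const_sub v
    have hd := (((hasDerivAt_id' (x := w)).add
        ((hu.pow 2).const_mul (a₁ - 1))).add
        ((hu.const_mul (1 - 2*a₁)).mul hv)).add
        ((hv.pow 2).const_mul (1 - a₁))
    erw [hd.deriv]; push_cast; ring
  rw [h1, h2, h3]
  unfold h5 F5
  ring
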